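/- Let ρ be an n-qubit density matrix and let Λ_ρ be the reset channel Λ_ρ(A) = Tr(A) · ρ. Then D(Λ_ρ) = 2^n · D(ρ); consequently D(Λ_ρ) > 1 unless ρ is the maximally mixed state I/2^n, so reset channels are generally not simulable by Schrödinger propagation. -/

import Mathlib

open Matrix BigOperators Kronecker ComplexOrder

noncomputable section

/-- The four single-qubit Pauli matrices `I, X, Y, Z`. -/
def pauli1 : Fin 4 → Matrix (Fin 2) (Fin 2) ℂ :=
  ![(1 : Matrix (Fin 2) (Fin 2) ℂ),
    !![0, 1; 1, 0],
    !![0, -Complex.I; Complex.I, 0],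
    !![1, 0; 0, -1]]

/-- The `n`-qubit Pauli matrix `σ_{s 0} ⊗ ⋯ ⊗ σ_{s (n-1)}`, as a matrix on `Fin n → Fin 2`. -/
def nPauli (n : ℕ) (s : Fin n → Fin 4) :
    Matrix (Fin n → Fin 2) (Fin n → Fin 2) ℂ :=
  Matrix.of fun x y => ∏ k : Fin n, pauli1 (s k) (x k) (y k)

/-- The stabilizer norm `D(A) = 2^{-n} Σ_{σ ∈ P_n} |Tr(σ A)|`. -/
def stabNorm {n : ℕ} (A : Matrix (Fin n → Fin 2) (Fin n → Fin 2) ℂ) : ℝ :=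
  ((2 : ℝ) ^ n)⁻¹ * ∑ s : Fin n → Fin 4, ‖(nPauli n s * A).trace‖

/-- The channel stabilizer norm `D(Λ) = max_{σ ∈ P_n} D(Λ(σ))`. -/
def chanNorm {n m : ℕ}
    (Λ : Matrix (Fin n → Fin 2) (Fin n → Fin 2) ℂ →ₗ[ℂ]
         Matrix (Fin m → Fin 2) (Fin m → Fin 2) ℂ) : ℝ :=
  ⨆ s : Fin n → Fin 4, stabNorm (Λ (nPauli n s))

lemma pauli1_orth (a b x y : Fin 2) :
    ∑ i : Fin 4, pauli1 i a b * pauli1 i x y =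
      if a = y ∧ b = x then 2 else 0 := by
  fin_cases a <;> fin_cases b <;> fin_cases x <;> fin_cases y <;>
    simp [pauli1, Fin.sum_univ_four, Matrix.one_apply, Complex.I_mul_I] <;> norm_num

lemma pauli1_trace (i : Fin 4) :
    ∑ j : Fin 2, pauli1 i j j = if i = 0 then 2 else 0 := by
  fin_cases i <;> simp [pauli1, Fin.sum_univ_two, Matrix.one_apply]

lemma nPauli_trace (n : ℕ) (s : Fin n → Fin 4) :
    (nPauli n s).trace = if s = fun _ => 0 then (2:ℂ)^n else 0 := by
  have h : (nPauli n s).trace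
      = ∏ k : Fin n, ∑ j : Fin 2, pauli1 (s k) j j := by
    rw [Finset.prod_univ_sum]
    simp [Matrix.trace, nPauli, Matrix.diag, Fintype.piFinset_univ]
  rw [h]
  simp_rw [pauli1_trace]
  by_cases hs : s = fun _ => 0
  · simp [hs]
  · rw [if_neg hs]
    obtain ⟨k, hk⟩ : ∃ k, s k ≠ 0 := by
      by_contra hc; push_neg at hc; exact hs (funext hc)
    exact Finset.prod_eq_zero (Finset.mem_univ k) (by simp [hk])

lemma nPauli_orth (n : ℕ) (a b x y : Fin n → Fin 2) :
    ∑ s : Fin n → Fin 4, nPauli n s a b * nPauli n s x y =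
      if a = y ∧ b = x then (2:ℂ)^n else 0 := by
  have h : ∑ s : Fin n → Fin 4, nPauli n s a b * nPauli n s x y
      = ∏ k : Fin n, ∑ i : Fin 4, pauli1 i (a k) (b k) * pauli1 i (x k) (y k) := by
    rw [Finset.prod_univ_sum]
    simp [nPauli, Fintype.piFinset_univ, ← Finset.prod_mul_distrib]
  rw [h]
  simp_rw [pauli1_orth]
  by_cases hc : a = y ∧ b = x
  · simp [hc.1, hc.2]
  · rw [if_neg hc]
    obtain ⟨k, hk⟩ : ∃ k, ¬(a k = y k ∧ b k = x k) := by
      by_contra hcc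
      push_neg at hcc
      exact hc ⟨funext fun k => (hcc k).1, funext fun k => (hcc k).2⟩
    exact Finset.prod_eq_zero (Finset.mem_univ k) (if_neg hk)

lemma sum_pauli_mul_trace (n : ℕ)
    (A : Matrix (Fin n → Fin 2) (Fin n → Fin 2) ℂ) (a b : Fin n → Fin 2) :
    ∑ s : Fin n → Fin 4, nPauli n s a b * (nPauli n s * A).trace
      = (2:ℂ)^n * A a b := by
  have htr : ∀ s, (nPauli n s * A).trace
      = ∑ x : Fin n → Fin 2, ∑ y : Fin n → Fin 2, nPauli n s x y * A y x := by
    intro s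
    simp [Matrix.trace, Matrix.diag, Matrix.mul_apply]
  simp_rw [htr, Finset.mul_sum]
  rw [Finset.sum_comm]
  have : ∀ x, ∑ s : Fin n → Fin 4, ∑ y, nPauli n s a b * (nPauli n s x y * A y x)
      = ∑ y, (if a = y ∧ b = x then (2:ℂ)^n else 0) * A y x := by
    intro x
    rw [Finset.sum_comm]
    refine Finset.sum_congr rfl fun y _ => ?_
    rw [← nPauli_orth n a b x y, Finset.sum_mul]
    refine Finset.sum_congr rfl fun s _ => by ring
  simp_rw [this, ite_and]
  simp [Finset.sum_ite_eq, Finset.sum_ite_eq']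

lemma eq_zero_of_traces (n : ℕ) (A : Matrix (Fin n → Fin 2) (Fin n → Fin 2) ℂ)
    (h : ∀ s, (nPauli n s * A).trace = 0) : A = 0 := by
  ext a b
  have h1 := sum_pauli_mul_trace n A a b
  simp only [h, mul_zero, Finset.sum_const_zero] at h1
  have h2 : ((2:ℂ)^n) ≠ 0 := pow_ne_zero _ two_ne_zero
  rcases mul_eq_zero.1 h1.symm with h3 | h3
  · exact absurd h3 h2
  · simpa using h3

lemma nPauli_zero (n : ℕ) : nPauli n (fun _ => 0) = 1 := by
  ext x y
  simp only [nPauli, Matrix.of_apply, pauli1, Matrix.cons_val_zero,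
    Matrix.one_apply]
  rw [Finset.prod_boole]
  simp [funext_iff]

lemma stabNorm_nonneg {n : ℕ} (A : Matrix (Fin n → Fin 2) (Fin n → Fin 2) ℂ) :
    0 ≤ stabNorm A := by
  unfold stabNorm
  positivity

lemma stabNorm_smul {n : ℕ} (c : ℂ) (A : Matrix (Fin n → Fin 2) (Fin n → Fin 2) ℂ) :
    stabNorm (c • A) = ‖c‖ * stabNorm A := by
  unfold stabNorm
  rw [Finset.mul_sum, Finset.mul_sum, Finset.mul_sum]
  refine Finset.sum_congr rfl fun s _ => ?_
  rw [Matrix.mul_smul, Matrix.trace_smul, smul_eq_mul, norm_mul]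
  ring

/-- For a reset channel `Λ_ρ(A) = Tr(A) ρ` with `ρ` a density matrix,
`D(Λ_ρ) = 2^n · D(ρ)`; consequently `D(Λ_ρ) > 1` unless `ρ = I/2^n`. -/
theorem chanNorm_reset (n : ℕ) (hn : 1 ≤ n)
    (ρ : Matrix (Fin n → Fin 2) (Fin n → Fin 2) ℂ)
    (hpsd : ρ.PosSemidef) (htr : ρ.trace = 1)
    (Λ : Matrix (Fin n → Fin 2) (Fin n → Fin 2) ℂ →ₗ[ℂ]
         Matrix (Fin n → Fin 2) (Fin n → Fin 2) ℂ)
    (hΛ : ∀ A : Matrix (Fin n → Fin 2) (Fin n → Fin 2) ℂ, Λ A = A.trace • ρ) :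
    chanNorm Λ = (2 : ℝ) ^ n * stabNorm ρ ∧
    (ρ ≠ ((2 : ℂ) ^ n)⁻¹ • (1 : Matrix (Fin n → Fin 2) (Fin n → Fin 2) ℂ) →
      1 < chanNorm Λ) := by
  have hDnn : 0 ≤ stabNorm ρ := stabNorm_nonneg ρ
  have hval : ∀ s : Fin n → Fin 4, stabNorm (Λ (nPauli n s))
      = if s = fun _ => 0 then (2:ℝ)^n * stabNorm ρ else 0 := by
    intro s
    rw [hΛ, stabNorm_smul, nPauli_trace]
    by_cases hs : s = fun _ => 0
    · simp [hs, norm_pow]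
    · simp [hs]
  have hsup : chanNorm Λ = (2:ℝ)^n * stabNorm ρ := by
    unfold chanNorm
    simp_rw [hval]
    apply le_antisymm
    · apply ciSup_le
      intro s
      by_cases hs : s = fun _ => 0
      · simp [hs]
      · rw [if_neg hs]
        positivity
    · have hb : BddAbove (Set.range fun s : Fin n → Fin 4 =>
          if s = fun _ => 0 then (2:ℝ)^n * stabNorm ρ else 0) :=
        (Set.finite_range _).bddAbove
      have := le_ciSup hb (fun _ => (0 : Fin 4))
      simpa using this
  refine ⟨hsup, fun hne => ?_⟩
  rw [hsup]
  set s₀ : Fin n → Fin 4 := fun _ => 0 with hs₀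
  set T : ℝ := ∑ s : Fin n → Fin 4, ‖(nPauli n s * ρ).trace‖ with hT
  have hterm0 : ‖(nPauli n s₀ * ρ).trace‖ = 1 := by
    rw [hs₀, nPauli_zero, one_mul, htr]
    simp
  have hsplit : T = 1 + ∑ s ∈ Finset.univ.erase s₀,
      ‖(nPauli n s * ρ).trace‖ := by
    rw [hT, ← Finset.add_sum_erase _ _ (Finset.mem_univ s₀), hterm0]
  have hrest_nonneg : 0 ≤ ∑ s ∈ Finset.univ.erase s₀,
      ‖(nPauli n s * ρ).trace‖ :=
    Finset.sum_nonneg fun s _ => norm_nonneg _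
  have hrest_ne : ∑ s ∈ Finset.univ.erase s₀,
      ‖(nPauli n s * ρ).trace‖ ≠ 0 := by
    intro h0
    have hall : ∀ s ∈ Finset.univ.erase s₀,
        ‖(nPauli n s * ρ).trace‖ = 0 :=
      (Finset.sum_eq_zero_iff_of_nonneg fun s _ => norm_nonneg _).1 h0
    have hAz : ρ - ((2:ℂ)^n)⁻¹ • (1 : Matrix (Fin n → Fin 2) (Fin n → Fin 2) ℂ) = 0 := by
      apply eq_zero_of_traces
      intro s
      rw [Matrix.mul_sub, Matrix.mul_smul, Matrix.mul_one, Matrix.trace_sub,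
        Matrix.trace_smul, nPauli_trace]
      by_cases hs : s = fun _ => 0
      · rw [if_pos hs, hs, ← hs₀, hs₀, nPauli_zero, one_mul, htr]
        have h2 : ((2:ℂ)^n) ≠ 0 := pow_ne_zero _ two_ne_zero
        simp only [smul_eq_mul]
        field_simp
        exact sub_self _
      · rw [if_neg hs]
        have hmem : s ∈ Finset.univ.erase s₀ :=
          Finset.mem_erase.2 ⟨hs, Finset.mem_univ s⟩
        have := hall s hmem
        rw [norm_eq_zero] at this
        simp [this]
    exact hne (by rwa [sub_eq_zero] at hAz)
  have hT1 : 1 < T := by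
    rw [hsplit]
    have : 0 < ∑ s ∈ Finset.univ.erase s₀,
        ‖(nPauli n s * ρ).trace‖ :=
      lt_of_le_of_ne hrest_nonneg (Ne.symm hrest_ne)
    linarith
  have h2n : ((2:ℝ)^n) ≠ 0 := by positivity
  have : (2:ℝ)^n * stabNorm ρ = T := by
    unfold stabNorm
    rw [← hT, ← mul_assoc, mul_inv_cancel₀ h2n, one_mul]
  rw [this]
  exact hT1
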